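/- arXiv:1001.0035 — 2 statements merged into one kernel-verified Lean document; each statement's English description precedes it below -/
import Mathlib

section
/- In particular, if A is an n×n matrix with det(A) = 0 and some cofactor of A is nonzero, then for all row indices i, j and column indices k, m the cofactors satisfy C_{i,k} · C_{j,m} = C_{i,m} · C_{j,k}. -/
open Matrix

/-- The `(i,j)` cofactor of a square matrix:
`C i j = (-1)^(i+j) * det (A with row i and column j removed)`. -/
def cofactor {n : ℕ} (A : Matrix (Fin (n + 1)) (Fin (n + 1)) ℂ) (i j : Fin (n + 1)) : ℂ :=
  (-1 : ℂ) ^ ((i : ℕ) + (j : ℕ)) * (A.submatrix i.succAbove j.succAbove).det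

lemma cofactor_eq_adjugate {n : ℕ} (A : Matrix (Fin (n + 1)) (Fin (n + 1)) ℂ)
    (i j : Fin (n + 1)) : cofactor A i j = adjugate A j i := by
  rw [adjugate_fin_succ_eq_det_submatrix, cofactor]

/-- If some `n×n` submatrix (deleting row `i₀`, column `j₀`) is invertible, then every vector
in the kernel of `A.mulVec` is a multiple of a fixed vector `e`. -/
lemma ker_scalar {n : ℕ} (A : Matrix (Fin (n + 1)) (Fin (n + 1)) ℂ) (i₀ j₀ : Fin (n + 1))
    (h : (A.submatrix i₀.succAbove j₀.succAbove).det ≠ 0) :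
    ∃ e : Fin (n + 1) → ℂ, ∀ u, A.mulVec u = 0 → ∀ p, u p = u j₀ * e p := by
  set B := A.submatrix i₀.succAbove j₀.succAbove with hBdef
  have hB : IsUnit B.det := isUnit_iff_ne_zero.mpr h
  set v : Fin n → ℂ := B⁻¹.mulVec (fun r => -A (i₀.succAbove r) j₀) with hv
  refine ⟨Fin.insertNth j₀ 1 v, fun u hu => ?_⟩
  set u' : Fin n → ℂ := fun s => u (j₀.succAbove s) with hu'
  have key : B.mulVec u' = u j₀ • (fun r => -A (i₀.succAbove r) j₀) := by
    funext r
    have h0 : ∑ q, A (i₀.succAbove r) q * u q = 0 := congrFun hu (i₀.succAbove r)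
    rw [Fin.sum_univ_succAbove _ j₀] at h0
    simp only [mulVec, dotProduct, Pi.smul_apply, smul_eq_mul, hBdef, submatrix_apply, hu']
    linear_combination h0
  have hvu : u' = u j₀ • v := by
    have := congrArg (fun w => B⁻¹.mulVec w) key
    simpa only [mulVec_mulVec, nonsing_inv_mul B hB, one_mulVec, mulVec_smul, hv] using this
  intro p
  refine Fin.succAboveCases j₀ ?_ ?_ p
  · simp
  · intro s
    have := congrFun hvu s
    simpa [hu', Fin.insertNth_apply_succAbove] using this

/-- if `det A = 0` and some cofactor of `A` is nonzero, then all `2 × 2`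
minors of the cofactor matrix vanish: `C i k * C j m = C i m * C j k`. -/
theorem statement6 {n : ℕ} (A : Matrix (Fin (n + 1)) (Fin (n + 1)) ℂ)
    (hdet : A.det = 0) (hcof : ∃ i j, cofactor A i j ≠ 0) :
    ∀ i j k m : Fin (n + 1),
      cofactor A i k * cofactor A j m = cofactor A i m * cofactor A j k := by
  obtain ⟨i₀, j₀, hc⟩ := hcof
  have hsub : (A.submatrix i₀.succAbove j₀.succAbove).det ≠ 0 := by
    intro h0
    apply hc
    rw [cofactor, h0, mul_zero]
  obtain ⟨e, he⟩ := ker_scalar A i₀ j₀ hsub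
  have hadj : ∀ q, A.mulVec (fun p => adjugate A p q) = 0 := by
    intro q
    funext p
    have : (A * adjugate A) p q = 0 := by rw [mul_adjugate, hdet]; simp
    simpa [mul_apply, mulVec, dotProduct] using this
  have key : ∀ p q, adjugate A p q = adjugate A j₀ q * e p := fun p q => he _ (hadj q) p
  intro i j k m
  rw [cofactor_eq_adjugate, cofactor_eq_adjugate, cofactor_eq_adjugate, cofactor_eq_adjugate,
    key k i, key m j, key m i, key k j]
  ring
end

section
/- Let q ∈ ℂ with q^p = 1, p = 2l+1 odd, and let a, t : ℂ× → ℂ with t even (t(−λ) = t(λ)) and set d(λ) = q^N a(−qλ) for a fixed integer N. Let D₁₁(λ) be the 2l×2l tridiagonal matrix with diagonal entries t(q^h λ) for h = 1,...,2l, subdiagonal entries −a(q^h λ) (h = 2,...,2l), and superdiagonal entries −d(q^h λ) (h = 1,...,2l−1). Then det D₁₁(λ) = det D₁₁(−λ), i.e. the cofactor C₁₁(λ) of the quasi-tridiagonal matrix D(λ) is an even function of λ. -/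
open Matrix

/-- The `2l × 2l` tridiagonal matrix `D₁₁(λ)` with diagonal entries `t (q^h λ)` for
`h = 1, ..., 2l`, subdiagonal entries `-a (q^h λ)` (`h = 2, ..., 2l`) and superdiagonal
entries `-d (q^h λ)` (`h = 1, ..., 2l-1`). Row `i` (`0`-based) corresponds to `h = i+1`. -/
def D11 (l : ℕ) (a d t : ℂ → ℂ) (q lam : ℂ) : Matrix (Fin (2 * l)) (Fin (2 * l)) ℂ :=
  fun i j =>
    if (i : ℕ) = j then t (q ^ ((i : ℕ) + 1) * lam)
    else if (j : ℕ) = (i : ℕ) + 1 then -d (q ^ ((i : ℕ) + 1) * lam)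
    else if (i : ℕ) = (j : ℕ) + 1 then -a (q ^ ((i : ℕ) + 1) * lam)
    else 0

/-- with `q^(2l+1) = 1`, `t` even and `d(λ) = q^N a(-qλ)`, the cofactor
`C₁₁(λ) = det D₁₁(λ)` is an even function of `λ` on `ℂ×`. -/
theorem statement10 (l : ℕ) (hl : 0 < l) (q : ℂ) (hq : q ^ (2 * l + 1) = 1)
    (N : ℤ) (a d t : ℂ → ℂ)
    (ht : ∀ lam : ℂ, lam ≠ 0 → t (-lam) = t lam)
    (hd : ∀ lam : ℂ, d lam = q ^ N * a (-(q * lam))) :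
    ∀ lam : ℂ, lam ≠ 0 → (D11 l a d t q lam).det = (D11 l a d t q (-lam)).det := by
  intro lam hlam
  have hq0 : q ≠ 0 := by
    intro h
    rw [h] at hq
    simp at hq
  set c : ℂ := q ^ (-N : ℤ) with hc
  have hc0 : c ≠ 0 := zpow_ne_zero _ hq0
  have hqc : q ^ N * c = 1 := by
    rw [hc, ← zpow_add₀ hq0]
    simp
  set S : Matrix (Fin (2 * l)) (Fin (2 * l)) ℂ := Matrix.diagonal (fun i => c ^ (i : ℕ))
    with hS
  have key : D11 l a d t q (-lam) * S = S * (D11 l a d t q lam)ᵀ := by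
    ext i j
    simp only [hS, Matrix.mul_diagonal, Matrix.diagonal_mul, Matrix.transpose_apply, D11]
    by_cases h1 : (i : ℕ) = (j : ℕ)
    · rw [if_pos h1, if_pos h1.symm]
      have hne : q ^ ((i : ℕ) + 1) * lam ≠ 0 := mul_ne_zero (pow_ne_zero _ hq0) hlam
      rw [show q ^ ((i : ℕ) + 1) * -lam = -(q ^ ((i : ℕ) + 1) * lam) by ring,
        ht _ hne, h1]
      ring
    · have h1' : ¬ (j : ℕ) = (i : ℕ) := fun h => h1 h.symm
      by_cases h2 : (j : ℕ) = (i : ℕ) + 1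
      · have h3 : ¬ (i : ℕ) = (j : ℕ) + 1 := by omega
        rw [if_neg h1, if_pos h2, if_neg h1', if_neg h3, if_pos h2]
        rw [show q ^ ((i : ℕ) + 1) * -lam = -(q ^ ((i : ℕ) + 1) * lam) by ring]
        rw [show d (-(q ^ ((i : ℕ) + 1) * lam)) = q ^ N * a (-(q * -(q ^ ((i : ℕ) + 1) * lam)))
          from hd _]
        rw [show -(q * -(q ^ ((i : ℕ) + 1) * lam)) = q ^ ((j : ℕ) + 1) * lam by rw [h2]; ring]
        rw [show c ^ (j : ℕ) = c ^ (i : ℕ) * c by rw [h2, pow_succ]]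
        linear_combination (-(a (q ^ ((j : ℕ) + 1) * lam)) * c ^ (i : ℕ)) * hqc
      · by_cases h3 : (i : ℕ) = (j : ℕ) + 1
        · rw [if_neg h1, if_neg h2, if_pos h3, if_neg h1', if_neg h2, if_pos h3]
          rw [show a (q ^ ((i : ℕ) + 1) * -lam) = a (-(q ^ ((i : ℕ) + 1) * lam)) by ring_nf]
          rw [show d (q ^ ((j : ℕ) + 1) * lam) = q ^ N * a (-(q * (q ^ ((j : ℕ) + 1) * lam)))
            from hd _]
          rw [show -(q * (q ^ ((j : ℕ) + 1) * lam)) = -(q ^ ((i : ℕ) + 1) * lam) by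
            rw [h3]; ring]
          rw [show c ^ (i : ℕ) = c ^ (j : ℕ) * c by rw [h3, pow_succ]]
          linear_combination (a (-(q ^ ((i : ℕ) + 1) * lam)) * c ^ (j : ℕ)) * hqc
        · rw [if_neg h1, if_neg h2, if_neg h3, if_neg h1', if_neg h2, if_neg h3]
          ring
  have hdet := congrArg Matrix.det key
  rw [Matrix.det_mul, Matrix.det_mul, Matrix.det_transpose] at hdet
  have hSdet : S.det ≠ 0 := by
    rw [hS, Matrix.det_diagonal]
    exact Finset.prod_ne_zero_iff.mpr (fun i _ => pow_ne_zero _ hc0)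
  apply mul_right_cancel₀ hSdet
  rw [hdet]; ring
end
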